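/- Let G be a group and B a nontrivial malnormal subgroup whose conjugates cover G. Then any two distinct lines (double translates gBh⁻¹) intersect in at most one point, and any two distinct points x, y ∈ G lie on a unique common line, namely x·B' where B' is the conjugate of B containing x⁻¹y. -/
import Mathlib


def Malnormal {G : Type*} [Group G] (B : Subgroup G) : Prop :=
  ∀ g : G, g ∉ B → ∀ x ∈ B, g⁻¹ * x * g ∈ B → x = 1

/-- A line is a double translate `gBh⁻¹` of the subgroup `B`. -/
def IsLine {G : Type*} [Group G] (B : Subgroup G) (L : Set G) : Prop :=
  ∃ g h : G, L = (fun b : G => g * b * h⁻¹) '' (B : Set G)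

theorem stmt_14 {G : Type*} [Group G] (B : Subgroup G)
    (hB : B ≠ ⊥) (hmal : Malnormal B)
    (hcover : ∀ g : G, ∃ h : G, h⁻¹ * g * h ∈ B) :
    (∀ L L' : Set G, IsLine B L → IsLine B L' → L ≠ L' →
      ∀ x y : G, x ∈ L ∩ L' → y ∈ L ∩ L' → x = y) ∧
    (∀ x y : G, x ≠ y → ∃! L : Set G, IsLine B L ∧ x ∈ L ∧ y ∈ L) := by
  -- distinct conjugates of B intersect trivially
  have conj_iff : ∀ c d z : G, z ≠ 1 → c⁻¹ * z * c ∈ B → d⁻¹ * z * d ∈ B →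
      ∀ w : G, c⁻¹ * w * c ∈ B → d⁻¹ * w * d ∈ B := by
    intro c d z hz hc hd w hw
    have hcd : c⁻¹ * d ∈ B := by
      by_contra hg
      have h1 : (c⁻¹ * d)⁻¹ * (c⁻¹ * z * c) * (c⁻¹ * d) = d⁻¹ * z * d := by group
      have h2 := hmal (c⁻¹ * d) hg (c⁻¹ * z * c) hc (h1 ▸ hd)
      apply hz
      calc z = c * (c⁻¹ * z * c) * c⁻¹ := by group
        _ = 1 := by rw [h2]; group
    have h3 : d⁻¹ * w * d = (c⁻¹ * d)⁻¹ * (c⁻¹ * w * c) * (c⁻¹ * d) := by group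
    rw [h3]
    exact B.mul_mem (B.mul_mem (B.inv_mem hcd) hw) hcd
  -- every line through x has the form x · cBc⁻¹
  have line_through : ∀ L : Set G, IsLine B L → ∀ x ∈ L,
      ∃ c : G, L = {z : G | c⁻¹ * (x⁻¹ * z) * c ∈ B} := by
    intro L hL x hx
    obtain ⟨g, h, rfl⟩ := hL
    obtain ⟨b₀, hb₀, rfl⟩ := hx
    refine ⟨h * b₀⁻¹, ?_⟩
    ext z
    simp only [Set.mem_image, SetLike.mem_coe, Set.mem_setOf_eq]
    constructor
    · rintro ⟨b, hb, rfl⟩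
      have e : (h * b₀⁻¹)⁻¹ * ((g * b₀ * h⁻¹)⁻¹ * (g * b * h⁻¹)) * (h * b₀⁻¹)
          = b * b₀⁻¹ := by group
      rw [e]
      exact B.mul_mem hb (B.inv_mem hb₀)
    · intro hz
      refine ⟨g⁻¹ * z * h, ?_, by group⟩
      have e : g⁻¹ * z * h
          = ((h * b₀⁻¹)⁻¹ * ((g * b₀ * h⁻¹)⁻¹ * z) * (h * b₀⁻¹)) * b₀ := by group
      rw [e]
      exact B.mul_mem hz hb₀
  have huniq : ∀ x y : G, x ≠ y → ∃! L : Set G, IsLine B L ∧ x ∈ L ∧ y ∈ L := by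
    intro x y hxy
    obtain ⟨h, hh⟩ := hcover (x⁻¹ * y)
    have hz1 : x⁻¹ * y ≠ 1 := fun e => hxy (inv_mul_eq_one.mp e)
    refine ⟨{z : G | h⁻¹ * (x⁻¹ * z) * h ∈ B}, ⟨⟨x * h, h, ?_⟩, ?_, hh⟩, ?_⟩
    · ext z
      simp only [Set.mem_setOf_eq, Set.mem_image, SetLike.mem_coe]
      constructor
      · intro hz
        exact ⟨h⁻¹ * (x⁻¹ * z) * h, hz, by group⟩
      · rintro ⟨b, hb, rfl⟩
        have e : h⁻¹ * (x⁻¹ * (x * h * b * h⁻¹)) * h = b := by group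
        rw [e]
        exact hb
    · show h⁻¹ * (x⁻¹ * x) * h ∈ B
      have e : h⁻¹ * (x⁻¹ * x) * h = 1 := by group
      rw [e]
      exact B.one_mem
    · rintro L ⟨hL, hxL, hyL⟩
      obtain ⟨c, rfl⟩ := line_through L hL x hxL
      have hyc : c⁻¹ * (x⁻¹ * y) * c ∈ B := hyL
      ext z
      simp only [Set.mem_setOf_eq]
      constructor
      · exact conj_iff c h (x⁻¹ * y) hz1 hyc hh (x⁻¹ * z)
      · exact conj_iff h c (x⁻¹ * y) hz1 hh hyc (x⁻¹ * z)
  refine ⟨?_, huniq⟩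
  intro L L' hL hL' hne x y hx hy
  by_contra hxy
  obtain ⟨L₀, _, hu⟩ := huniq x y hxy
  exact hne ((hu L ⟨hL, hx.1, hy.1⟩).trans (hu L' ⟨hL', hx.2, hy.2⟩).symm)
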